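/- Dual optimum as the primal residual (Proposition 1, attainment part): for every binary vector τ ∈ {0,1}^n, if x* attains the primal infimum p(τ) and (α*, β_v*, β_h*) attains the dual supremum d(τ), then α* = y − A x*. -/

import Mathlib

open Matrix BigOperators

open Pointwise

lemma dot_transpose (n : ℕ) (M : Matrix (Fin n) (Fin n) ℝ) (u w : Fin n → ℝ) :
    ∑ i, u i * Mᵀ.mulVec w i = ∑ i, M.mulVec u i * w i := by
  have h := Matrix.dotProduct_mulVec u Mᵀ w
  rw [Matrix.vecMul_transpose] at h
  simpa [dotProduct] using h

lemma euclid_inner (n : ℕ) (a b : EuclideanSpace ℝ (Fin n)) :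
    (inner ℝ a b : ℝ) = ∑ i, a i * b i := by
  simp [PiLp.inner_apply, RCLike.inner_apply, mul_comm]

lemma ball2_convex (lam a b x1 y1 x2 y2 : ℝ) (ha : 0 ≤ a) (hb : 0 ≤ b) (hab : a + b = 1)
    (h1 : x1^2 + y1^2 ≤ lam^2) (h2 : x2^2 + y2^2 ≤ lam^2) :
    (a*x1 + b*x2)^2 + (a*y1 + b*y2)^2 ≤ lam^2 := by
  obtain rfl : b = 1 - a := by linarith
  nlinarith [mul_nonneg (mul_nonneg ha hb) (sq_nonneg (x1-x2)),
    mul_nonneg (mul_nonneg ha hb) (sq_nonneg (y1-y2)),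
    mul_nonneg (mul_nonneg ha ha) (by linarith : (0:ℝ) ≤ lam^2 - x1^2 - y1^2),
    mul_nonneg (mul_nonneg hb hb) (by linarith : (0:ℝ) ≤ lam^2 - x2^2 - y2^2),
    mul_nonneg (mul_nonneg ha hb) (by linarith : (0:ℝ) ≤ lam^2 - x1^2 - y1^2),
    mul_nonneg (mul_nonneg ha hb) (by linarith : (0:ℝ) ≤ lam^2 - x2^2 - y2^2)]

lemma exists_cert (n : ℕ) (Dv Dh : Matrix (Fin n) (Fin n) ℝ) (lam : ℝ) (hlam : 0 < lam)
    (τ : Fin n → ℝ) (p : Fin n → ℝ)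
    (hp : ∀ h : Fin n → ℝ, (∀ i, τ i = 0 → Dv.mulVec h i = 0 ∧ Dh.mulVec h i = 0) →
      ∑ i, p i * h i ≤ lam * ∑ i, Real.sqrt ((Dv.mulVec h i)^2 + (Dh.mulVec h i)^2)) :
    ∃ βv βh : Fin n → ℝ, (p = Dvᵀ.mulVec βv + Dhᵀ.mulVec βh)
      ∧ ∀ i, τ i = 1 → Real.sqrt ((βv i)^2 + (βh i)^2) ≤ lam := by
  classical
  -- the constraint set, in plain pi space
  set K₀ : Set (Fin n → ℝ) :=
    {w | ∃ bv bh : Fin n → ℝ,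
      (∀ i, τ i = 1 → (bv i)^2 + (bh i)^2 ≤ lam^2)
      ∧ w = Dvᵀ.mulVec bv + Dhᵀ.mulVec bh} with hK₀def
  -- linear map assembling the certificate
  let L : ((Fin n → ℝ) × (Fin n → ℝ)) →ₗ[ℝ] (Fin n → ℝ) :=
    Dvᵀ.mulVecLin.comp (LinearMap.fst ℝ _ _) + Dhᵀ.mulVecLin.comp (LinearMap.snd ℝ _ _)
  have hL : ∀ q : (Fin n → ℝ) × (Fin n → ℝ), L q = Dvᵀ.mulVec q.1 + Dhᵀ.mulVec q.2 :=
    fun q => rfl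
  -- the subspace part (free on indices with τ ≠ 1)
  let W : Submodule ℝ ((Fin n → ℝ) × (Fin n → ℝ)) :=
    { carrier := {q | ∀ i, τ i = 1 → q.1 i = 0 ∧ q.2 i = 0}
      add_mem' := by
        intro a b ha hb i hi
        constructor <;> simp [Prod.fst_add, Prod.snd_add, (ha i hi).1, (hb i hi).1,
          (ha i hi).2, (hb i hi).2]
      zero_mem' := by intro i hi; simp
      smul_mem' := by intro c a ha i hi; simp [(ha i hi).1, (ha i hi).2] }
  let Vsub : Submodule ℝ (Fin n → ℝ) := Submodule.map L W
  -- the compact part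
  let B : Set ((Fin n → ℝ) × (Fin n → ℝ)) := {q | ∀ i, (q.1 i)^2 + (q.2 i)^2 ≤ lam^2}
  have hBclosed : IsClosed B := by
    have : B = ⋂ i, {q : (Fin n → ℝ) × (Fin n → ℝ) | (q.1 i)^2 + (q.2 i)^2 ≤ lam^2} := by
      ext q; simp [B, Set.mem_iInter]
    rw [this]
    exact isClosed_iInter fun i => isClosed_le (by fun_prop) continuous_const
  have hBbdd : Bornology.IsBounded B := by
    rw [isBounded_iff_forall_norm_le]
    refine ⟨lam, fun q hq => ?_⟩
    have habs : ∀ (x y : ℝ), x^2 + y^2 ≤ lam^2 → |x| ≤ lam := by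
      intro x y hxy
      rw [abs_le]
      constructor <;> nlinarith [sq_nonneg y, sq_nonneg (x+lam), sq_nonneg (x-lam)]
    rw [Prod.norm_def]
    refine max_le ?_ ?_
    · exact pi_norm_le_iff_of_nonneg hlam.le |>.mpr fun i => by
        simpa [Real.norm_eq_abs] using habs (q.1 i) (q.2 i) (hq i)
    · exact pi_norm_le_iff_of_nonneg hlam.le |>.mpr fun i => by
        simpa [Real.norm_eq_abs] using habs (q.2 i) (q.1 i) (by linarith [hq i])
  have hBcompact : IsCompact B := by
    rw [Metric.isCompact_iff_isClosed_bounded]; exact ⟨hBclosed, hBbdd⟩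
  have hCcompact : IsCompact (L '' B) :=
    hBcompact.image L.continuous_of_finiteDimensional
  -- K₀ = Vsub + L '' B
  have hKeq : K₀ = (Vsub : Set (Fin n → ℝ)) + (L '' B) := by
    ext w
    constructor
    · rintro ⟨bv, bh, hcon, rfl⟩
      rw [Set.mem_add]
      refine ⟨L (fun i => if τ i = 1 then 0 else bv i, fun i => if τ i = 1 then 0 else bh i),
        ⟨_, by intro i hi; simp [hi], rfl⟩,
        L (fun i => if τ i = 1 then bv i else 0, fun i => if τ i = 1 then bh i else 0),
        ⟨_, by
          intro i; by_cases hi : τ i = 1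
          · simpa [hi] using hcon i hi
          · simpa [hi] using sq_nonneg lam, rfl⟩,
        ?_⟩
      rw [hL, hL]
      have h1 : (fun i => if τ i = 1 then 0 else bv i) + (fun i => if τ i = 1 then bv i else 0) = bv := by
        funext i; by_cases hi : τ i = 1 <;> simp [hi]
      have h2 : (fun i => if τ i = 1 then 0 else bh i) + (fun i => if τ i = 1 then bh i else 0) = bh := by
        funext i; by_cases hi : τ i = 1 <;> simp [hi]
      calc (Dvᵀ.mulVec _ + Dhᵀ.mulVec _) + (Dvᵀ.mulVec _ + Dhᵀ.mulVec _)
          = Dvᵀ.mulVec ((fun i => if τ i = 1 then 0 else bv i) + (fun i => if τ i = 1 then bv i else 0))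
            + Dhᵀ.mulVec ((fun i => if τ i = 1 then 0 else bh i) + (fun i => if τ i = 1 then bh i else 0)) := by
            rw [Matrix.mulVec_add, Matrix.mulVec_add]; abel
        _ = Dvᵀ.mulVec bv + Dhᵀ.mulVec bh := by rw [h1, h2]
    · intro hw
      rw [Set.mem_add] at hw
      obtain ⟨x, hx, c, hc, rfl⟩ := hw
      obtain ⟨q0, hq0, rfl⟩ := hx
      obtain ⟨q1, hq1, rfl⟩ := hc
      refine ⟨q0.1 + q1.1, q0.2 + q1.2, fun i hi => ?_, ?_⟩
      · have h0 := hq0 i hi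
        simp only [Pi.add_apply, h0.1, h0.2, zero_add]
        exact hq1 i
      · rw [hL, hL, Matrix.mulVec_add, Matrix.mulVec_add]; abel
  have hK₀closed : IsClosed K₀ := by
    rw [hKeq]
    exact (Vsub.closed_of_finiteDimensional).add_right_of_isCompact hCcompact
  have hK₀conv : Convex ℝ K₀ := by
    rintro w1 ⟨bv1, bh1, hc1, rfl⟩ w2 ⟨bv2, bh2, hc2, rfl⟩ a b ha hb hab
    refine ⟨a • bv1 + b • bv2, a • bh1 + b • bh2, fun i hi => ?_, ?_⟩
    · simpa using ball2_convex lam a b (bv1 i) (bh1 i) (bv2 i) (bh2 i) ha hb hab (hc1 i hi) (hc2 i hi)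
    · simp only [Matrix.mulVec_add, Matrix.mulVec_smul, smul_add]
      module
  have hK₀ne : K₀.Nonempty := ⟨0, 0, 0, fun i _ => by simpa using sq_nonneg lam, by simp⟩
  -- move to Euclidean space
  let φ : EuclideanSpace ℝ (Fin n) ≃L[ℝ] (Fin n → ℝ) := EuclideanSpace.equiv (Fin n) ℝ
  have hφ : ∀ w : EuclideanSpace ℝ (Fin n), φ w = (w : Fin n → ℝ) := fun _ => rfl
  let K : Set (EuclideanSpace ℝ (Fin n)) := ⇑φ ⁻¹' K₀
  have hKclosed : IsClosed K := hK₀closed.preimage φ.continuous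
  have hKconv : Convex ℝ K := hK₀conv.linear_preimage φ.toLinearEquiv.toLinearMap
  obtain ⟨w₀, hw₀⟩ := hK₀ne
  have hKne : K.Nonempty := ⟨φ.symm w₀, by
    simp only [K, Set.mem_preimage, ContinuousLinearEquiv.apply_symm_apply]
    exact hw₀⟩
  -- project p onto K
  obtain ⟨v, hvK, hvmin⟩ := exists_norm_eq_iInf_of_complete_convex hKne
    (hKclosed.isComplete) hKconv (φ.symm p)
  have hproj : ∀ w ∈ K, (inner ℝ (φ.symm p - v) (w - v) : ℝ) ≤ 0 :=
    (norm_eq_iInf_iff_real_inner_le_zero hKconv hvK).mp hvmin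
  -- the residual direction
  set h : Fin n → ℝ := fun i => p i - (φ v) i with hhdef
  have hinner : ∀ w : EuclideanSpace ℝ (Fin n),
      (inner ℝ (φ.symm p - v) (w - v) : ℝ) = ∑ i, h i * (φ w i - φ v i) := by
    intro w
    rw [euclid_inner]
    refine Finset.sum_congr rfl fun i _ => ?_
    simp only [PiLp.sub_apply]
    congr 1
  -- generic perturbation inequality
  have key : ∀ zv zh : Fin n → ℝ, (∀ j, τ j = 1 → zv j = 0 ∧ zh j = 0) →
      ∑ j, h j * (Dvᵀ.mulVec zv + Dhᵀ.mulVec zh) j ≤ 0 := by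
    intro zv zh hz
    obtain ⟨bv, bh, hbcon, hveq⟩ := hvK
    set u : Fin n → ℝ := Dvᵀ.mulVec zv + Dhᵀ.mulVec zh with hudef
    have hwmem : φ.symm (φ v + u) ∈ K := by
      simp only [K, Set.mem_preimage, ContinuousLinearEquiv.apply_symm_apply]
      refine ⟨bv + zv, bh + zh, fun j hj => ?_, ?_⟩
      · simp only [Pi.add_apply, (hz j hj).1, (hz j hj).2, add_zero]
        exact hbcon j hj
      · rw [hveq, hudef, Matrix.mulVec_add, Matrix.mulVec_add]; abel
    have := hproj _ hwmem
    rw [hinner] at this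
    have hφw : ∀ j, φ (φ.symm (φ v + u)) j - φ v j = u j := by
      intro j
      rw [ContinuousLinearEquiv.apply_symm_apply]
      simp
    calc ∑ j, h j * u j = ∑ j, h j * (φ (φ.symm (φ v + u)) j - φ v j) := by
          refine Finset.sum_congr rfl fun j _ => ?_; rw [hφw]
      _ ≤ 0 := this
  -- feasibility of the direction h
  have hfeas : ∀ i, τ i = 0 → Dv.mulVec h i = 0 ∧ Dh.mulVec h i = 0 := by
    intro i hi
    have hsingle : ∀ j, τ j = 1 → (Pi.single i (1:ℝ) : Fin n → ℝ) j = 0 := by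
      intro j hj
      have hji : j ≠ i := by
        intro e; rw [e, hi] at hj; norm_num at hj
      simp [Pi.single_apply, hji]
    have hdot : ∀ (c : ℝ), ∑ j, h j * (Dvᵀ.mulVec (c • ((Pi.single i (1:ℝ) : Fin n → ℝ)))) j
        = c * Dv.mulVec h i := by
      intro c
      rw [Matrix.mulVec_smul]
      have : ∑ j, h j * (c • Dvᵀ.mulVec ((Pi.single i (1:ℝ) : Fin n → ℝ))) j
          = c * ∑ j, h j * Dvᵀ.mulVec ((Pi.single i (1:ℝ) : Fin n → ℝ)) j := by
        rw [Finset.mul_sum]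
        refine Finset.sum_congr rfl fun j _ => ?_
        simp [Pi.smul_apply]; ring
      rw [this, dot_transpose]
      simp [Pi.single_apply]
    have hdot2 : ∀ (c : ℝ), ∑ j, h j * (Dhᵀ.mulVec (c • ((Pi.single i (1:ℝ) : Fin n → ℝ)))) j
        = c * Dh.mulVec h i := by
      intro c
      rw [Matrix.mulVec_smul]
      have : ∑ j, h j * (c • Dhᵀ.mulVec ((Pi.single i (1:ℝ) : Fin n → ℝ))) j
          = c * ∑ j, h j * Dhᵀ.mulVec ((Pi.single i (1:ℝ) : Fin n → ℝ)) j := by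
        rw [Finset.mul_sum]
        refine Finset.sum_congr rfl fun j _ => ?_
        simp [Pi.smul_apply]; ring
      rw [this, dot_transpose]
      simp [Pi.single_apply]
    have hv1 : ∀ (c : ℝ), c * Dv.mulVec h i ≤ 0 := by
      intro c
      have := key (c • (Pi.single i (1:ℝ) : Fin n → ℝ)) 0 (fun j hj => by
        simp [Pi.smul_apply, hsingle j hj])
      simpa [Matrix.mulVec_zero, hdot c] using this
    have hh1 : ∀ (c : ℝ), c * Dh.mulVec h i ≤ 0 := by
      intro c
      have := key 0 (c • (Pi.single i (1:ℝ) : Fin n → ℝ)) (fun j hj => by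
        simp [Pi.smul_apply, hsingle j hj])
      simpa [Matrix.mulVec_zero, hdot2 c] using this
    constructor
    · have h1 := hv1 1; have h2 := hv1 (-1); linarith
    · have h1 := hh1 1; have h2 := hh1 (-1); linarith
  -- the maximizing certificate direction
  set sfun : Fin n → ℝ := fun i => Real.sqrt ((Dv.mulVec h i)^2 + (Dh.mulVec h i)^2) with hsdef
  set bvs : Fin n → ℝ := fun i => if sfun i = 0 then 0 else lam * Dv.mulVec h i / sfun i with hbvs
  set bhs : Fin n → ℝ := fun i => if sfun i = 0 then 0 else lam * Dh.mulVec h i / sfun i with hbhs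
  have hs2 : ∀ i, sfun i ≠ 0 → sfun i ^ 2 = (Dv.mulVec h i)^2 + (Dh.mulVec h i)^2 := by
    intro i _
    exact Real.sq_sqrt (by positivity)
  have hscon : ∀ i, (bvs i)^2 + (bhs i)^2 ≤ lam^2 := by
    intro i
    by_cases hi : sfun i = 0
    · simp only [hbvs, hbhs, if_pos hi]
      simpa using sq_nonneg lam
    · simp only [hbvs, hbhs, if_neg hi]
      have e : (lam * Dv.mulVec h i / sfun i)^2 + (lam * Dh.mulVec h i / sfun i)^2
          = lam^2 * ((Dv.mulVec h i)^2 + (Dh.mulVec h i)^2) / sfun i^2 := by ring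
      rw [e, ← hs2 i hi, mul_div_assoc, div_self (pow_ne_zero 2 hi), mul_one]
  have hwmem : φ.symm (Dvᵀ.mulVec bvs + Dhᵀ.mulVec bhs) ∈ K := by
    simp only [K, Set.mem_preimage, ContinuousLinearEquiv.apply_symm_apply]
    exact ⟨bvs, bhs, fun i _ => hscon i, rfl⟩
  have hTs : ∑ j, h j * (Dvᵀ.mulVec bvs + Dhᵀ.mulVec bhs) j = lam * ∑ i, sfun i := by
    have e1 : ∑ j, h j * (Dvᵀ.mulVec bvs + Dhᵀ.mulVec bhs) j
        = ∑ j, h j * Dvᵀ.mulVec bvs j + ∑ j, h j * Dhᵀ.mulVec bhs j := by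
      rw [← Finset.sum_add_distrib]
      refine Finset.sum_congr rfl fun j _ => ?_
      simp [Pi.add_apply]; ring
    rw [e1, dot_transpose, dot_transpose, ← Finset.sum_add_distrib, Finset.mul_sum]
    refine Finset.sum_congr rfl fun j _ => ?_
    by_cases hj : sfun j = 0
    · have hz : (Dv.mulVec h j)^2 + (Dh.mulVec h j)^2 = 0 := by
        have := hj
        rw [hsdef] at this
        simp only at this
        exact (Real.sqrt_eq_zero (by positivity)).mp this
      have hv0 : Dv.mulVec h j = 0 := by nlinarith [sq_nonneg (Dv.mulVec h j), sq_nonneg (Dh.mulVec h j)]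
      have hh0 : Dh.mulVec h j = 0 := by nlinarith [sq_nonneg (Dv.mulVec h j), sq_nonneg (Dh.mulVec h j)]
      simp [hbvs, hbhs, hj, hv0, hh0]
    · simp only [hbvs, hbhs, if_neg hj]
      have e : Dv.mulVec h j * (lam * Dv.mulVec h j / sfun j)
            + Dh.mulVec h j * (lam * Dh.mulVec h j / sfun j)
          = lam * ((Dv.mulVec h j)^2 + (Dh.mulVec h j)^2) / sfun j := by ring
      rw [e, ← hs2 j hj, sq]
      field_simp
  have hle : lam * ∑ i, sfun i ≤ ∑ j, h j * (φ v) j := by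
    have := hproj _ hwmem
    rw [hinner] at this
    have hφw : ∀ j, φ (φ.symm (Dvᵀ.mulVec bvs + Dhᵀ.mulVec bhs)) j
        = (Dvᵀ.mulVec bvs + Dhᵀ.mulVec bhs) j := by
      intro j; rw [ContinuousLinearEquiv.apply_symm_apply]
    have e : ∑ j, h j * (φ (φ.symm (Dvᵀ.mulVec bvs + Dhᵀ.mulVec bhs)) j - φ v j)
        = ∑ j, h j * (Dvᵀ.mulVec bvs + Dhᵀ.mulVec bhs) j - ∑ j, h j * (φ v) j := by
      rw [← Finset.sum_sub_distrib]
      refine Finset.sum_congr rfl fun j _ => ?_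
      rw [hφw]; ring
    rw [e, hTs] at this
    linarith
  have hhp2 : ∑ i, p i * h i ≤ lam * ∑ i, sfun i := hp h hfeas
  have hvpt : ∑ j, h j * (φ v) j = ∑ j, p j * h j - ∑ j, h j * h j := by
    rw [← Finset.sum_sub_distrib]
    refine Finset.sum_congr rfl fun j _ => ?_
    have : h j = p j - (φ v) j := rfl
    rw [this]; ring
  have hh0 : ∑ j, h j * h j ≤ 0 := by
    rw [hvpt] at hle
    linarith
  have hhz : ∀ j, h j = 0 := by
    have hzero : ∑ j, h j * h j = 0 :=
      le_antisymm hh0 (Finset.sum_nonneg fun j _ => mul_self_nonneg _)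
    intro j
    have := (Finset.sum_eq_zero_iff_of_nonneg (fun j _ => mul_self_nonneg (h j))).mp hzero j
      (Finset.mem_univ j)
    exact mul_self_eq_zero.mp this
  obtain ⟨bv, bh, hbcon, hveq⟩ := hvK
  refine ⟨bv, bh, ?_, fun i hi => ?_⟩
  · funext i
    have hpi : p i = (φ v) i := by
      have := hhz i
      have e : h i = p i - (φ v) i := rfl
      rw [e] at this
      linarith
    rw [hpi]
    exact congrFun hveq i
  · have := hbcon i hi
    have : Real.sqrt ((bv i)^2 + (bh i)^2) ≤ Real.sqrt (lam^2) := Real.sqrt_le_sqrt this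
    rwa [Real.sqrt_sq hlam.le] at this

lemma small_t (K c : ℝ) (hK : 0 ≤ K) (h : ∀ t : ℝ, 0 < t → t < 1 → 0 ≤ c*t + K*t^2) : 0 ≤ c := by
  by_contra hc
  push_neg at hc
  set t : ℝ := min (1/2) ((-c)/(2*(K+1))) with ht
  have htpos : 0 < t := lt_min (by norm_num) (div_pos (by linarith) (by linarith))
  have ht1 : t < 1 := lt_of_le_of_lt (min_le_left _ _) (by norm_num)
  have h2 : t ≤ (-c)/(2*(K+1)) := min_le_right _ _
  have hKt : K*t ≤ K * ((-c)/(2*(K+1))) := by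
    apply mul_le_mul_of_nonneg_left h2 hK
  have : K * ((-c)/(2*(K+1))) < -c := by
    rw [mul_div_assoc']
    rw [div_lt_iff₀ (by positivity)]
    nlinarith
  have hneg : c + K*t < 0 := by linarith
  have := h t htpos ht1
  nlinarith

lemma cs2 (a b c d : ℝ) : a*b + c*d ≤ Real.sqrt (a^2+c^2) * Real.sqrt (b^2+d^2) := by
  have h1 : Real.sqrt ((a*b+c*d)^2) ≤ Real.sqrt ((a^2+c^2)*(b^2+d^2)) := by
    apply Real.sqrt_le_sqrt; nlinarith [sq_nonneg (a*d - b*c)]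
  calc a*b + c*d ≤ |a*b+c*d| := le_abs_self _
    _ = Real.sqrt ((a*b+c*d)^2) := (Real.sqrt_sq_eq_abs _).symm
    _ ≤ Real.sqrt ((a^2+c^2)*(b^2+d^2)) := h1
    _ = _ := Real.sqrt_mul (by positivity) _

lemma sqrt_pair_add (a b c d : ℝ) :
    Real.sqrt ((a+b)^2+(c+d)^2) ≤ Real.sqrt (a^2+c^2) + Real.sqrt (b^2+d^2) := by
  have h2 : (a+b)^2+(c+d)^2 ≤ (Real.sqrt (a^2+c^2) + Real.sqrt (b^2+d^2))^2 := by
    have hcs := cs2 a b c d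
    have e1 : Real.sqrt (a^2+c^2)^2 = a^2+c^2 := Real.sq_sqrt (by positivity)
    have e2 : Real.sqrt (b^2+d^2)^2 = b^2+d^2 := Real.sq_sqrt (by positivity)
    nlinarith
  calc Real.sqrt ((a+b)^2+(c+d)^2) ≤ Real.sqrt ((Real.sqrt (a^2+c^2) + Real.sqrt (b^2+d^2))^2) :=
        Real.sqrt_le_sqrt h2
    _ = _ := by rw [Real.sqrt_sq (by positivity)]

lemma sqrt_smul2 (c a b : ℝ) (hc : 0 ≤ c) :
    Real.sqrt ((c*a)^2 + (c*b)^2) = c * Real.sqrt (a^2+b^2) := by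
  have e : (c*a)^2 + (c*b)^2 = c^2 * (a^2+b^2) := by ring
  rw [e, Real.sqrt_mul (sq_nonneg c), Real.sqrt_sq hc]

lemma dot_transpose' (n : ℕ) (M : Matrix (Fin n) (Fin n) ℝ) (u w : Fin n → ℝ) :
    ∑ i, u i * M.mulVec w i = ∑ i, Mᵀ.mulVec u i * w i := by
  simpa [Matrix.transpose_transpose] using dot_transpose n Mᵀ u w


/-- Proposition 1 (attainment part): if x* attains the primal infimum p(τ) and
(α*, βv*, βh*) attains the dual supremum d(τ), then α* = y − A x*. -/
theorem mptv_dual_opt_is_residual (n : ℕ) (hn : 1 ≤ n) (y : Fin n → ℝ)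
    (A Dv Dh : Matrix (Fin n) (Fin n) ℝ) (lam : ℝ) (hlam : 0 < lam)
    (τ : Fin n → ℝ) (hτ : ∀ i, τ i = 0 ∨ τ i = 1)
    (xstar : Fin n → ℝ)
    (hxfeas : ∀ i, τ i = 0 → Dv.mulVec xstar i = 0 ∧ Dh.mulVec xstar i = 0)
    (hxmin : ∀ x : Fin n → ℝ,
      (∀ i, τ i = 0 → Dv.mulVec x i = 0 ∧ Dh.mulVec x i = 0) →
      (1 / 2) * ∑ i, (y i - A.mulVec xstar i) ^ 2
          + lam * ∑ i, Real.sqrt ((Dv.mulVec xstar i) ^ 2 + (Dh.mulVec xstar i) ^ 2)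
        ≤ (1 / 2) * ∑ i, (y i - A.mulVec x i) ^ 2
          + lam * ∑ i, Real.sqrt ((Dv.mulVec x i) ^ 2 + (Dh.mulVec x i) ^ 2))
    (αstar βvstar βhstar : Fin n → ℝ)
    (hdfeas : Aᵀ.mulVec αstar = Dvᵀ.mulVec βvstar + Dhᵀ.mulVec βhstar
      ∧ ∀ i, τ i = 1 → Real.sqrt ((βvstar i) ^ 2 + (βhstar i) ^ 2) ≤ lam)
    (hdmax : ∀ α βv βh : Fin n → ℝ,
      (Aᵀ.mulVec α = Dvᵀ.mulVec βv + Dhᵀ.mulVec βh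
        ∧ ∀ i, τ i = 1 → Real.sqrt ((βv i) ^ 2 + (βh i) ^ 2) ≤ lam) →
      -(1 / 2) * ∑ i, (α i) ^ 2 + ∑ i, α i * y i
        ≤ -(1 / 2) * ∑ i, (αstar i) ^ 2 + ∑ i, αstar i * y i) :
    αstar = y - A.mulVec xstar := by
  classical
  set r : Fin n → ℝ := fun i => y i - A.mulVec xstar i with hrdef
  have hr : ∀ i, r i = y i - A.mulVec xstar i := fun _ => rfl
  set Ssum : ℝ := ∑ i, Real.sqrt ((Dv.mulVec xstar i)^2 + (Dh.mulVec xstar i)^2) with hSdef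
  set Cr : ℝ := ∑ i, r i * A.mulVec xstar i with hCrdef
  -- quadratic expansion
  have quad_expand : ∀ (t : ℝ) (u : Fin n → ℝ),
      ∑ i, (y i - (A.mulVec (xstar + t • u)) i)^2
      = ∑ i, (r i)^2 - (2*t) * (∑ i, r i * A.mulVec u i) + t^2 * ∑ i, (A.mulVec u i)^2 := by
    intro t u
    have e : ∀ i, (y i - (A.mulVec (xstar + t • u)) i)^2
        = (r i)^2 - (2*t) * (r i * A.mulVec u i) + t^2 * (A.mulVec u i)^2 := by
      intro i
      have hA : A.mulVec (xstar + t • u) i = A.mulVec xstar i + t * A.mulVec u i := by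
        rw [Matrix.mulVec_add, Matrix.mulVec_smul]
        simp
      rw [hA, hr i]
      ring
    rw [Finset.sum_congr rfl (fun i _ => e i), Finset.sum_add_distrib,
      Finset.sum_sub_distrib, ← Finset.mul_sum, ← Finset.mul_sum]
  -- directional inequality: the primal optimality of xstar
  have hdir : ∀ h : Fin n → ℝ, (∀ i, τ i = 0 → Dv.mulVec h i = 0 ∧ Dh.mulVec h i = 0) →
      ∑ i, r i * A.mulVec h i
        ≤ lam * ∑ i, Real.sqrt ((Dv.mulVec h i)^2 + (Dh.mulVec h i)^2) := by
    intro h hfeash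
    set N : ℝ := ∑ i, Real.sqrt ((Dv.mulVec h i)^2 + (Dh.mulVec h i)^2) with hNdef
    set C : ℝ := ∑ i, r i * A.mulVec h i with hCdef
    set Q : ℝ := ∑ i, (A.mulVec h i)^2 with hQdef
    have hkey : ∀ t : ℝ, 0 < t → t < 1 → 0 ≤ (lam*N - C)*t + (Q/2)*t^2 := by
      intro t ht0 ht1
      have hfeasx : ∀ i, τ i = 0 → Dv.mulVec (xstar + t • h) i = 0
          ∧ Dh.mulVec (xstar + t • h) i = 0 := by
        intro i hi
        constructor <;>
        · rw [Matrix.mulVec_add, Matrix.mulVec_smul]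
          simp [(hxfeas i hi).1, (hxfeas i hi).2, (hfeash i hi).1, (hfeash i hi).2]
      have step := hxmin (xstar + t • h) hfeasx
      have hquad := quad_expand t h
      have htv : ∑ i, Real.sqrt ((Dv.mulVec (xstar + t • h) i)^2 + (Dh.mulVec (xstar + t • h) i)^2)
          ≤ Ssum + t * N := by
        have hb : ∀ i, Real.sqrt ((Dv.mulVec (xstar + t • h) i)^2 + (Dh.mulVec (xstar + t • h) i)^2)
            ≤ Real.sqrt ((Dv.mulVec xstar i)^2 + (Dh.mulVec xstar i)^2)
              + t * Real.sqrt ((Dv.mulVec h i)^2 + (Dh.mulVec h i)^2) := by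
          intro i
          have hv : Dv.mulVec (xstar + t • h) i = Dv.mulVec xstar i + t * Dv.mulVec h i := by
            rw [Matrix.mulVec_add, Matrix.mulVec_smul]; simp
          have hh : Dh.mulVec (xstar + t • h) i = Dh.mulVec xstar i + t * Dh.mulVec h i := by
            rw [Matrix.mulVec_add, Matrix.mulVec_smul]; simp
          rw [hv, hh]
          calc Real.sqrt ((Dv.mulVec xstar i + t * Dv.mulVec h i)^2
                + (Dh.mulVec xstar i + t * Dh.mulVec h i)^2)
              ≤ Real.sqrt ((Dv.mulVec xstar i)^2 + (Dh.mulVec xstar i)^2)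
                + Real.sqrt ((t * Dv.mulVec h i)^2 + (t * Dh.mulVec h i)^2) :=
                sqrt_pair_add _ _ _ _
            _ = _ := by rw [sqrt_smul2 t _ _ ht0.le]
        calc ∑ i, Real.sqrt ((Dv.mulVec (xstar + t • h) i)^2 + (Dh.mulVec (xstar + t • h) i)^2)
            ≤ ∑ i, (Real.sqrt ((Dv.mulVec xstar i)^2 + (Dh.mulVec xstar i)^2)
              + t * Real.sqrt ((Dv.mulVec h i)^2 + (Dh.mulVec h i)^2)) :=
              Finset.sum_le_sum fun i _ => hb i
          _ = Ssum + t * N := by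
              rw [Finset.sum_add_distrib, ← Finset.mul_sum]
      rw [hquad] at step
      have hq2 : ∑ i, (y i - A.mulVec xstar i)^2 = ∑ i, (r i)^2 :=
        Finset.sum_congr rfl fun i _ => by rw [hr i]
      rw [hq2] at step
      have htv2 : lam * (∑ i, Real.sqrt ((Dv.mulVec (xstar + t • h) i)^2
          + (Dh.mulVec (xstar + t • h) i)^2)) ≤ lam * (Ssum + t * N) :=
        mul_le_mul_of_nonneg_left htv hlam.le
      nlinarith [step, htv2]
    have := small_t (Q/2) (lam*N - C) (by positivity) hkey
    linarith
  -- scaling equality: Cr = lam * Ssum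
  have hscale : Cr = lam * Ssum := by
    have haux : ∀ ε : ℝ, ε = 1 ∨ ε = -1 → 0 ≤ ε * (lam * Ssum - Cr) := by
      intro ε hε
      have hkey : ∀ t : ℝ, 0 < t → t < 1 → 0 ≤ (ε * (lam*Ssum - Cr))*t
          + ((∑ i, (A.mulVec xstar i)^2)/2)*t^2 := by
        intro t ht0 ht1
        have hεt : 0 ≤ 1 + ε*t := by rcases hε with h1 | h1 <;> rw [h1] <;> nlinarith
        have hx : xstar + (ε*t) • xstar = (1 + ε*t) • xstar := by
          rw [add_smul, one_smul]
        have hfeasx : ∀ i, τ i = 0 → Dv.mulVec (xstar + (ε*t) • xstar) i = 0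
            ∧ Dh.mulVec (xstar + (ε*t) • xstar) i = 0 := by
          intro i hi
          constructor <;>
          · rw [Matrix.mulVec_add, Matrix.mulVec_smul]
            simp [(hxfeas i hi).1, (hxfeas i hi).2]
        have step := hxmin (xstar + (ε*t) • xstar) hfeasx
        have hquad := quad_expand (ε*t) xstar
        have htv : ∑ i, Real.sqrt ((Dv.mulVec (xstar + (ε*t) • xstar) i)^2
            + (Dh.mulVec (xstar + (ε*t) • xstar) i)^2) = (1 + ε*t) * Ssum := by
          rw [Finset.mul_sum]
          refine Finset.sum_congr rfl fun i _ => ?_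
          have hv : Dv.mulVec (xstar + (ε*t) • xstar) i = (1 + ε*t) * Dv.mulVec xstar i := by
            rw [hx, Matrix.mulVec_smul]; simp
          have hh : Dh.mulVec (xstar + (ε*t) • xstar) i = (1 + ε*t) * Dh.mulVec xstar i := by
            rw [hx, Matrix.mulVec_smul]; simp
          rw [hv, hh, sqrt_smul2 _ _ _ hεt]
        have hq2 : ∑ i, (y i - A.mulVec xstar i)^2 = ∑ i, (r i)^2 :=
          Finset.sum_congr rfl fun i _ => by rw [hr i]
        rw [hquad, hq2, htv] at step
        rcases hε with rfl | rfl <;> nlinarith [step, hCrdef]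
      have := small_t _ _ (by positivity) hkey
      linarith
    have h1 := haux 1 (Or.inl rfl)
    have h2 := haux (-1) (Or.inr rfl)
    nlinarith [h1, h2]
  -- r is dual feasible, via the certificate lemma
  obtain ⟨bv, bh, hceq, hccon⟩ := exists_cert n Dv Dh lam hlam τ (Aᵀ.mulVec r) (by
    intro h hfeash
    have e : ∑ i, Aᵀ.mulVec r i * h i = ∑ i, r i * A.mulVec h i := by
      rw [← dot_transpose' n A r h]
    calc ∑ i, Aᵀ.mulVec r i * h i = ∑ i, r i * A.mulVec h i := e
      _ ≤ _ := hdir h hfeash)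
  -- dual optimality applied at r
  have hdual := hdmax r bv bh ⟨hceq, hccon⟩
  -- bound on ⟨αstar, A xstar⟩
  have hc1 : ∑ i, αstar i * A.mulVec xstar i ≤ lam * Ssum := by
    have e1 : ∑ i, αstar i * A.mulVec xstar i = ∑ i, Aᵀ.mulVec αstar i * xstar i :=
      dot_transpose' n A αstar xstar
    rw [e1, hdfeas.1]
    have e2 : ∑ i, (Dvᵀ.mulVec βvstar + Dhᵀ.mulVec βhstar) i * xstar i
        = ∑ i, (Dv.mulVec xstar i * βvstar i + Dh.mulVec xstar i * βhstar i) := by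
      have e3 : ∀ i, (Dvᵀ.mulVec βvstar + Dhᵀ.mulVec βhstar) i * xstar i
          = xstar i * Dvᵀ.mulVec βvstar i + xstar i * Dhᵀ.mulVec βhstar i := by
        intro i; simp only [Pi.add_apply]; ring
      rw [Finset.sum_congr rfl (fun i _ => e3 i), Finset.sum_add_distrib,
        dot_transpose n Dv xstar βvstar, dot_transpose n Dh xstar βhstar,
        ← Finset.sum_add_distrib]
    rw [e2]
    have hper : ∀ i, Dv.mulVec xstar i * βvstar i + Dh.mulVec xstar i * βhstar i
        ≤ lam * Real.sqrt ((Dv.mulVec xstar i)^2 + (Dh.mulVec xstar i)^2) := by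
      intro i
      rcases hτ i with hi | hi
      · rw [(hxfeas i hi).1, (hxfeas i hi).2]
        simp only [zero_mul, add_zero, zero_add]
        positivity
      · calc Dv.mulVec xstar i * βvstar i + Dh.mulVec xstar i * βhstar i
            ≤ Real.sqrt ((Dv.mulVec xstar i)^2 + (Dh.mulVec xstar i)^2)
              * Real.sqrt ((βvstar i)^2 + (βhstar i)^2) := cs2 _ _ _ _
          _ ≤ Real.sqrt ((Dv.mulVec xstar i)^2 + (Dh.mulVec xstar i)^2) * lam :=
              mul_le_mul_of_nonneg_left (hdfeas.2 i hi) (Real.sqrt_nonneg _)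
          _ = lam * Real.sqrt ((Dv.mulVec xstar i)^2 + (Dh.mulVec xstar i)^2) := mul_comm _ _
    calc ∑ i, (Dv.mulVec xstar i * βvstar i + Dh.mulVec xstar i * βhstar i)
        ≤ ∑ i, lam * Real.sqrt ((Dv.mulVec xstar i)^2 + (Dh.mulVec xstar i)^2) :=
          Finset.sum_le_sum fun i _ => hper i
      _ = lam * Ssum := by rw [← Finset.mul_sum]
  -- final algebra
  have hys : ∑ i, r i * y i = ∑ i, (r i)^2 + Cr := by
    rw [hCrdef, ← Finset.sum_add_distrib]
    refine Finset.sum_congr rfl fun i _ => ?_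
    rw [hr i]; ring
  have hαy : ∑ i, αstar i * y i
      = ∑ i, αstar i * r i + ∑ i, αstar i * A.mulVec xstar i := by
    rw [← Finset.sum_add_distrib]
    refine Finset.sum_congr rfl fun i _ => ?_
    rw [hr i]; ring
  rw [hys, hαy] at hdual
  have hsq : ∑ i, (αstar i - r i)^2
      = ∑ i, (αstar i)^2 - 2*(∑ i, αstar i * r i) + ∑ i, (r i)^2 := by
    have e : ∀ i, (αstar i - r i)^2 = (αstar i)^2 - 2*(αstar i * r i) + (r i)^2 :=
      fun i => by ring
    rw [Finset.sum_congr rfl fun i _ => e i, Finset.sum_add_distrib,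
      Finset.sum_sub_distrib, ← Finset.mul_sum]
  have hsum0 : ∑ i, (αstar i - r i)^2 ≤ 0 := by
    rw [hsq]
    linarith [hdual, hc1, hscale]
  have hzero : ∑ i, (αstar i - r i)^2 = 0 :=
    le_antisymm hsum0 (Finset.sum_nonneg fun i _ => sq_nonneg _)
  funext i
  have hi0 := (Finset.sum_eq_zero_iff_of_nonneg (fun i _ => sq_nonneg (αstar i - r i))).mp
    hzero i (Finset.mem_univ i)
  have : αstar i = r i := by nlinarith [hi0]
  rw [Pi.sub_apply]
  rw [this, hr i]
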